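/- Let S ⊆ ℤ[x]^n be an affine ℕ[x]-semimodule, let k be a field of characteristic zero equipped with a ring endomorphism σ_k, and let k[S] = AddMonoidAlgebra k S with the ring endomorphism σ determined by σ(c·T^u) = σ_k(c)·T^{x·u}. Let F be a subset of S. Then the k-linear span of the set of monomials {T^u : u ∈ S \ F} is a σ-prime ideal of k[S] if and only if F is a face of S. (Lemma 6.8.) -/

import Mathlib

open Polynomial AddMonoidAlgebra

/-- `S ⊆ ℤ[x]^n` is an `ℕ[x]`-semimodule: it contains `0`, is closed under addition, and
closed under multiplication by elements of `ℕ[x]` (acting via the inclusion `ℕ[x] → ℤ[x]`). -/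
def IsNxSemimodule {n : ℕ} (S : Set (Fin n → Polynomial ℤ)) : Prop :=
  0 ∈ S ∧ (∀ u ∈ S, ∀ v ∈ S, u + v ∈ S) ∧
    ∀ g : Polynomial ℕ, ∀ u ∈ S, (g.map (Nat.castRingHom ℤ)) • u ∈ S

/-- `S` is an affine `ℕ[x]`-semimodule: it is generated by finitely many elements. -/
def IsAffineNxSemimodule {n : ℕ} (S : Set (Fin n → Polynomial ℤ)) : Prop :=
  ∃ (m : ℕ) (u : Fin m → Fin n → Polynomial ℤ),
    S = {x | ∃ g : Fin m → Polynomial ℕ, x = ∑ i, ((g i).map (Nat.castRingHom ℤ)) • u i}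

/-- `F` is a face of the `ℕ[x]`-semimodule `S`: it is an `ℕ[x]`-subsemimodule of `S` such
that (1) `u + v ∈ F` implies `u, v ∈ F` for `u, v ∈ S`, and (2) `x·u ∈ F` implies `u ∈ F`
for `u ∈ S`. -/
def IsFace {n : ℕ} (S F : Set (Fin n → Polynomial ℤ)) : Prop :=
  F ⊆ S ∧ IsNxSemimodule F ∧
    (∀ u ∈ S, ∀ v ∈ S, u + v ∈ F → u ∈ F ∧ v ∈ F) ∧
    (∀ u ∈ S, (Polynomial.X : Polynomial ℤ) • u ∈ F → u ∈ F)

lemma uniqueSums_polyInt : UniqueSums (Polynomial ℤ) :=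
  (((Polynomial.toFinsuppIso ℤ).toAddEquiv.trans AddMonoidAlgebra.coeffAddEquiv).uniqueSums_iff).mpr
    (inferInstance : UniqueSums (ℕ →₀ ℤ))

lemma uniqueSums_sub {n : ℕ} (S : AddSubmonoid (Fin n → Polynomial ℤ)) : UniqueSums S :=
  haveI := uniqueSums_polyInt
  UniqueSums.of_injective_addHom S.subtype.toAddHom Subtype.coe_injective inferInstance

lemma X_smul_injective {n : ℕ} :
    Function.Injective (fun u : Fin n → Polynomial ℤ => (Polynomial.X : Polynomial ℤ) • u) := by
  intro u v h
  funext i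
  have := congrFun h i
  simp only [Pi.smul_apply, smul_eq_mul] at this
  exact mul_left_cancel₀ Polynomial.X_ne_zero this

theorem span_monomials_sigmaPrime_iff_face
    (k : Type*) [Field k] [CharZero k] (σk : k →+* k) {n : ℕ}
    (S : AddSubmonoid (Fin n → Polynomial ℤ))
    (hS : IsNxSemimodule (S : Set (Fin n → Polynomial ℤ)))
    (haff : IsAffineNxSemimodule (S : Set (Fin n → Polynomial ℤ)))
    (σ : AddMonoidAlgebra k S →+* AddMonoidAlgebra k S)
    (hσ : ∀ (w : S) (c : k), σ (AddMonoidAlgebra.single w c) =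
      AddMonoidAlgebra.single
        ⟨(Polynomial.X : Polynomial ℤ) • (w : Fin n → Polynomial ℤ),
          by simpa using hS.2.2 Polynomial.X (w : Fin n → Polynomial ℤ) w.2⟩ (σk c))
    (F : Set (Fin n → Polynomial ℤ)) (hF : F ⊆ (S : Set (Fin n → Polynomial ℤ))) :
    (∃ I : Ideal (AddMonoidAlgebra k S),
        (I : Set (AddMonoidAlgebra k S)) =
          (Submodule.span k {a : AddMonoidAlgebra k S |
            ∃ w : S, (w : Fin n → Polynomial ℤ) ∉ F ∧ a = AddMonoidAlgebra.single w 1} :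
              Submodule k (AddMonoidAlgebra k S)) ∧
        I.IsPrime ∧ (∀ a ∈ I, σ a ∈ I) ∧ (∀ a, σ a ∈ I → a ∈ I)) ↔
      IsFace (S : Set (Fin n → Polynomial ℤ)) F := by
  classical
  haveI := uniqueSums_sub S
  set T : Set S := {w : S | (w : Fin n → Polynomial ℤ) ∉ F} with hT
  have hspan : (Submodule.span k {a : AddMonoidAlgebra k S |
      ∃ w : S, (w : Fin n → Polynomial ℤ) ∉ F ∧ a = AddMonoidAlgebra.single w 1}) =
      AddMonoidAlgebra.supported k k T := by
    rw [AddMonoidAlgebra.supported_eq_span_single]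
    congr 1
    ext a
    constructor
    · rintro ⟨w, hw, rfl⟩; exact ⟨w, hw, rfl⟩
    · rintro ⟨w, hw, rfl⟩; exact ⟨w, hw, rfl⟩
  -- σ of a general element
  have hσsum : ∀ a : AddMonoidAlgebra k S,
      σ a = a.coeff.sum fun w c => AddMonoidAlgebra.single
        ⟨(Polynomial.X : Polynomial ℤ) • (w : Fin n → Polynomial ℤ),
          by simpa using hS.2.2 Polynomial.X (w : Fin n → Polynomial ℤ) w.2⟩ (σk c) := by
    intro a
    conv_lhs => rw [← AddMonoidAlgebra.sum_coeff_single a]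
    rw [map_finsuppSum]
    exact Finsupp.sum_congr fun w _ => hσ w (a.coeff w)
  constructor
  · rintro ⟨I, hI, hprime, hσI, hσI'⟩
    have hmem : ∀ a : AddMonoidAlgebra k S, a ∈ I ↔ (↑a.coeff.support : Set S) ⊆ T := by
      intro a
      rw [← SetLike.mem_coe, hI, hspan]
      exact AddMonoidAlgebra.mem_supported
    have hsingle : ∀ w : S, AddMonoidAlgebra.single w (1:k) ∈ I ↔
        (w : Fin n → Polynomial ℤ) ∉ F := by
      intro w
      rw [hmem, AddMonoidAlgebra.coeff_single, Finsupp.support_single_ne_zero w one_ne_zero]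
      simp [hT]
    -- 0 ∈ F
    have h0 : (0 : Fin n → Polynomial ℤ) ∈ F := by
      by_contra h0
      have : AddMonoidAlgebra.single (0 : S) (1:k) ∈ I := (hsingle 0).mpr (by simpa using h0)
      rw [← AddMonoidAlgebra.one_def] at this
      exact hprime.ne_top ((Ideal.eq_top_iff_one I).mpr this)
    -- additive closure of F
    have haddF : ∀ u v : S, (u : Fin n → Polynomial ℤ) ∈ F →
        (v : Fin n → Polynomial ℤ) ∈ F → ((u + v : S) : Fin n → Polynomial ℤ) ∈ F := by
      intro u v hu hv
      by_contra h
      have h1 : AddMonoidAlgebra.single (u + v) (1:k) ∈ I := (hsingle _).mpr h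
      rw [show AddMonoidAlgebra.single (u + v) (1:k) =
          AddMonoidAlgebra.single u 1 * AddMonoidAlgebra.single v 1 by
        rw [AddMonoidAlgebra.single_mul_single, one_mul]] at h1
      rcases hprime.mem_or_mem h1 with h2 | h2
      · exact (hsingle u).mp h2 hu
      · exact (hsingle v).mp h2 hv
    -- X-closure of F
    have hXF : ∀ w : S, (w : Fin n → Polynomial ℤ) ∈ F →
        (Polynomial.X : Polynomial ℤ) • (w : Fin n → Polynomial ℤ) ∈ F := by
      intro w hw
      by_contra h
      have h1 : σ (AddMonoidAlgebra.single w (1:k)) ∈ I := by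
        rw [hσ, map_one]
        exact (hsingle _).mpr h
      exact (hsingle w).mp (hσI' _ h1) hw
    -- X-reverse
    have hXrev : ∀ w : S, (Polynomial.X : Polynomial ℤ) • (w : Fin n → Polynomial ℤ) ∈ F →
        (w : Fin n → Polynomial ℤ) ∈ F := by
      intro w hw
      by_contra h
      have h1 : AddMonoidAlgebra.single w (1:k) ∈ I := (hsingle w).mpr h
      have h2 := hσI _ h1
      rw [hσ, map_one] at h2
      exact (hsingle _).mp h2 hw
    -- nsmul closure
    have hnsmul : ∀ (a : ℕ) (u : Fin n → Polynomial ℤ), u ∈ F → a • u ∈ F := by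
      intro a
      induction a with
      | zero => intro u _; simpa using h0
      | succ a ih =>
        intro u hu
        rw [succ_nsmul]
        exact haddF ⟨a • u, hF (ih u hu)⟩ ⟨u, hF hu⟩ (ih u hu) hu
    -- X^i closure
    have hXpow : ∀ (i : ℕ) (u : Fin n → Polynomial ℤ), u ∈ F →
        ((Polynomial.X : Polynomial ℤ) ^ i) • u ∈ F := by
      intro i
      induction i with
      | zero => intro u hu; simpa using hu
      | succ i ih =>
        intro u hu
        rw [pow_succ, mul_comm, mul_smul]
        exact hXF ⟨_, hF (ih u hu)⟩ (ih u hu)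
    refine ⟨hF, ⟨h0, ?_, ?_⟩, ?_, fun u hu => hXrev ⟨u, hu⟩⟩
    · intro u hu v hv
      exact haddF ⟨u, hF hu⟩ ⟨v, hF hv⟩ hu hv
    · intro g
      induction g using Polynomial.induction_on' with
      | add p q hp hq =>
        intro u hu
        rw [Polynomial.map_add, add_smul]
        have h1 := hp u hu
        have h2 := hq u hu
        exact haddF ⟨_, hF h1⟩ ⟨_, hF h2⟩ h1 h2
      | monomial i a =>
        intro u hu
        rw [Polynomial.map_monomial, ← Polynomial.C_mul_X_pow_eq_monomial, mul_smul]
        have h1 : ((Polynomial.X : Polynomial ℤ) ^ i) • u ∈ F := hXpow i u hu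
        have h2 : (Polynomial.C ((Nat.castRingHom ℤ) a)) = ((a : Polynomial ℤ)) := by simp
        rw [h2, Nat.cast_smul_eq_nsmul]
        exact hnsmul a _ h1
    · intro u hu v hv huv
      constructor
      · by_contra h
        have h1 : AddMonoidAlgebra.single (⟨u, hu⟩ : S) (1:k) ∈ I := (hsingle _).mpr h
        have h2 : AddMonoidAlgebra.single ((⟨u, hu⟩ : S) + ⟨v, hv⟩) (1:k) ∈ I := by
          rw [show AddMonoidAlgebra.single ((⟨u, hu⟩ : S) + ⟨v, hv⟩) (1:k) =
              AddMonoidAlgebra.single ⟨u, hu⟩ 1 * AddMonoidAlgebra.single ⟨v, hv⟩ 1 by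
            rw [AddMonoidAlgebra.single_mul_single, one_mul]]
          exact Ideal.mul_mem_right _ I h1
        exact (hsingle _).mp h2 huv
      · by_contra h
        have h1 : AddMonoidAlgebra.single (⟨v, hv⟩ : S) (1:k) ∈ I := (hsingle _).mpr h
        have h2 : AddMonoidAlgebra.single ((⟨u, hu⟩ : S) + ⟨v, hv⟩) (1:k) ∈ I := by
          rw [show AddMonoidAlgebra.single ((⟨u, hu⟩ : S) + ⟨v, hv⟩) (1:k) =
              AddMonoidAlgebra.single ⟨u, hu⟩ 1 * AddMonoidAlgebra.single ⟨v, hv⟩ 1 by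
            rw [AddMonoidAlgebra.single_mul_single, one_mul]]
          exact Ideal.mul_mem_left I _ h1
        exact (hsingle _).mp h2 huv
  · rintro ⟨-, ⟨h0F, haddF, hsmulF⟩, hsplit, hXface⟩
    -- mul closure of the supported submodule
    have hmulT : ∀ (f a : AddMonoidAlgebra k S), a ∈ AddMonoidAlgebra.supported k k T →
        f * a ∈ AddMonoidAlgebra.supported k k T := by
      intro f a ha
      rw [AddMonoidAlgebra.mem_supported] at ha ⊢
      intro z hz
      rw [Finset.mem_coe] at hz
      obtain ⟨p, hp, q, hq, rfl⟩ := Finset.mem_add.mp (AddMonoidAlgebra.support_coeff_mul_subset f a hz)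
      have hq' : (q : Fin n → Polynomial ℤ) ∉ F := ha hq
      intro hpq
      exact hq' (hsplit (p : Fin n → Polynomial ℤ) p.2 (q : Fin n → Polynomial ℤ) q.2 hpq).2
    set I : Ideal (AddMonoidAlgebra k S) :=
      { carrier := {a : AddMonoidAlgebra k S | a ∈ AddMonoidAlgebra.supported k k T}
        add_mem' := fun ha hb => (AddMonoidAlgebra.supported k k T).add_mem ha hb
        zero_mem' := (AddMonoidAlgebra.supported k k T).zero_mem
        smul_mem' := fun f a ha => by
          rw [smul_eq_mul]; exact hmulT f a ha } with hIdef
    have hmemI : ∀ a : AddMonoidAlgebra k S, a ∈ I ↔ (↑a.coeff.support : Set S) ⊆ T :=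
      fun a => Iff.rfl
    have hXFclo : ∀ u ∈ F, (Polynomial.X : Polynomial ℤ) • u ∈ F := by
      intro u hu
      have := hsmulF Polynomial.X u hu
      simpa using this
    refine ⟨I, ?_, ?_, ?_, ?_⟩
    · rw [hspan]; rfl
    · constructor
      · intro htop
        have h1 : (1 : AddMonoidAlgebra k S) ∈ I := htop ▸ Submodule.mem_top
        rw [AddMonoidAlgebra.one_def, hmemI, AddMonoidAlgebra.coeff_single,
          Finsupp.support_single_ne_zero _ one_ne_zero] at h1
        have := h1 (Finset.mem_coe.mpr (Finset.mem_singleton_self 0))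
        exact this (by simpa using h0F)
      · intro f g hfg
        by_contra hc
        push_neg at hc
        obtain ⟨hf, hg⟩ := hc
        set P : S → Prop := fun w => (w : Fin n → Polynomial ℤ) ∈ F with hP
        set fF : AddMonoidAlgebra k S := AddMonoidAlgebra.ofCoeff (f.coeff.filter P) with hfF
        set gF : AddMonoidAlgebra k S := AddMonoidAlgebra.ofCoeff (g.coeff.filter P) with hgF
        set fR : AddMonoidAlgebra k S := AddMonoidAlgebra.ofCoeff (f.coeff.filter (fun w => ¬ P w)) with hfRdef
        set gR : AddMonoidAlgebra k S := AddMonoidAlgebra.ofCoeff (g.coeff.filter (fun w => ¬ P w)) with hgRdef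
        have hfR : fR ∈ I := by
          rw [hmemI]
          intro z hz
          rw [Finset.mem_coe, AddMonoidAlgebra.coeff_ofCoeff, Finsupp.support_filter, Finset.mem_filter] at hz
          exact hz.2
        have hgR : gR ∈ I := by
          rw [hmemI]
          intro z hz
          rw [Finset.mem_coe, AddMonoidAlgebra.coeff_ofCoeff, Finsupp.support_filter, Finset.mem_filter] at hz
          exact hz.2
        have hfsplit : fF + fR = f := AddMonoidAlgebra.coeff_injective (f.coeff.filter_pos_add_filter_neg P)
        have hgsplit : gF + gR = g := AddMonoidAlgebra.coeff_injective (g.coeff.filter_pos_add_filter_neg P)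
        have hkey : fF * gF ∈ I := by
          have : fF * gF = f * g - fR * g - fF * gR := by
            conv_rhs => rw [← hfsplit, ← hgsplit]
            ring
          rw [this]
          exact Submodule.sub_mem _
            (Submodule.sub_mem _ hfg (Ideal.mul_mem_right _ I hfR))
            (Ideal.mul_mem_left I _ hgR)
        -- support of fF * gF lies in F
        have hsupFF : ∀ z ∈ (fF * gF).coeff.support, (z : Fin n → Polynomial ℤ) ∈ F := by
          intro z hz
          obtain ⟨p, hp, q, hq, rfl⟩ := Finset.mem_add.mp
            (AddMonoidAlgebra.support_coeff_mul_subset fF gF hz)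
          rw [hfF, AddMonoidAlgebra.coeff_ofCoeff, Finsupp.support_filter, Finset.mem_filter] at hp
          rw [hgF, AddMonoidAlgebra.coeff_ofCoeff, Finsupp.support_filter, Finset.mem_filter] at hq
          exact haddF _ hp.2 _ hq.2
        have h0' : fF * gF = 0 := by
          rw [← AddMonoidAlgebra.coeff_eq_zero, ← Finsupp.support_eq_empty, Finset.eq_empty_iff_forall_notMem]
          intro z hz
          exact (hmemI _).mp hkey (Finset.mem_coe.mpr hz) (hsupFF z hz)
        rcases mul_eq_zero.mp h0' with h | h
        · apply hf
          rw [hmemI]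
          intro z hz
          rw [Finset.mem_coe, Finsupp.mem_support_iff] at hz
          intro hzF
          have : fF.coeff z = f.coeff z := Finsupp.filter_apply_pos P f.coeff hzF
          rw [h, AddMonoidAlgebra.coeff_zero, Finsupp.zero_apply] at this
          exact hz this.symm
        · apply hg
          rw [hmemI]
          intro z hz
          rw [Finset.mem_coe, Finsupp.mem_support_iff] at hz
          intro hzF
          have : gF.coeff z = g.coeff z := Finsupp.filter_apply_pos P g.coeff hzF
          rw [h, AddMonoidAlgebra.coeff_zero, Finsupp.zero_apply] at this
          exact hz this.symm
    · intro a ha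
      rw [hσsum]
      refine Submodule.sum_mem _ fun w hw => ?_
      rw [hmemI]
      intro z hz
      rw [Finset.mem_coe, AddMonoidAlgebra.coeff_single] at hz
      have hz' := Finsupp.support_single_subset hz
      rw [Finset.mem_singleton] at hz'
      subst hz'
      intro hmemF
      have hw' : (w : Fin n → Polynomial ℤ) ∉ F := (hmemI a).mp ha (Finset.mem_coe.mpr hw)
      exact hw' (hXface (w : Fin n → Polynomial ℤ) w.2 hmemF)
    · intro a ha
      by_contra hmem
      rw [hmemI, Set.subset_def] at hmem
      push_neg at hmem
      obtain ⟨w0, hw0s, hw0F⟩ := hmem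
      rw [Finset.mem_coe, Finsupp.mem_support_iff] at hw0s
      have hw0F' : (w0 : Fin n → Polynomial ℤ) ∈ F := not_not.mp hw0F
      set w1 : S := ⟨(Polynomial.X : Polynomial ℤ) • (w0 : Fin n → Polynomial ℤ),
        by simpa using hS.2.2 Polynomial.X (w0 : Fin n → Polynomial ℤ) w0.2⟩ with hw1
      have hval : (σ a).coeff w1 = σk (a.coeff w0) := by
        rw [hσsum, AddMonoidAlgebra.coeff_finsuppSum, Finsupp.sum_apply]
        rw [Finsupp.sum]
        rw [Finset.sum_eq_single w0]
        · rw [AddMonoidAlgebra.coeff_single, Finsupp.single_apply, if_pos rfl]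
        · intro w hw hne
          rw [AddMonoidAlgebra.coeff_single, Finsupp.single_apply, if_neg]
          intro hEq
          apply hne
          have : (Polynomial.X : Polynomial ℤ) • (w : Fin n → Polynomial ℤ) =
              (Polynomial.X : Polynomial ℤ) • (w0 : Fin n → Polynomial ℤ) :=
            congrArg Subtype.val hEq
          exact Subtype.ext (X_smul_injective this)
        · intro h; exact absurd (Finsupp.mem_support_iff.mpr hw0s) h
      have hne : (σ a).coeff w1 ≠ 0 := by
        rw [hval]
        exact fun h => hw0s (σk.injective (by simpa using h))
      have hw1T : w1 ∈ T := (hmemI _).mp ha (Finset.mem_coe.mpr (Finsupp.mem_support_iff.mpr hne))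
      exact hw1T (hXFclo _ hw0F')
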